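/- arXiv:1908.10393 — 4 statements merged into one kernel-verified Lean document; each statement's English description precedes it below -/
import Mathlib

section
/- (Main theorem, first direction.) Let σ:H×H→A be a k-bilinear H^R-balanced map (σ(hr,k)=σ(h,rk) for all r∈H^R), and set ς(h⊗k):=σ(h,k). If ρ and σ satisfy conditions (1)–(10), then ρ and ς satisfy conditions (2), (4), (11) and (17)–(22); explicitly: (11) h·(l·1_A)=hl·1_A for all h,l∈H; (17) (h⁽¹⁾·ς(k⁽¹⁾⊗m⁽¹⁾))ς(h⁽²⁾⊗k⁽²⁾m⁽²⁾)=ς(h⁽¹⁾⊗k⁽¹⁾)ς(h⁽²⁾k⁽²⁾⊗m); (18) (h⁽¹⁾·(k⁽¹⁾·a))ς(h⁽²⁾⊗k⁽²⁾)=ς(h⁽¹⁾⊗k⁽¹⁾)(h⁽²⁾k⁽²⁾·a); (19) ς(h⊗k)=ς(h⁽¹⁾⊗k⁽¹⁾)(h⁽²⁾k⁽²⁾·1_A); (20) h·1_A=(h⁽¹⁾·(1⁽¹⁾·1_A))ς(h⁽²⁾⊗1⁽²⁾); (21) h·1_A=(1⁽¹⁾·1_A)ς(1⁽²⁾⊗h);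 (22) a(1⁽¹⁾·1_A)⊗1⁽²⁾=(1⁽¹⁾·a)⊗1⁽²⁾ in A⊗H. -/
open scoped TensorProduct

/-- The data of a weak bialgebra structure (together with an antipode and its
inverse) on a `k`-algebra `H`: a comultiplication `Δ`, a counit `ε`, an
antipode `S` and its inverse `Sinv`. -/
structure WeakHopfData (k H : Type*) [Field k] [Ring H] [Algebra k H] where
  Δ : H →ₗ[k] H ⊗[k] H
  ε : H →ₗ[k] k
  S : H →ₗ[k] H
  Sinv : H →ₗ[k] H

section

variable {k H A : Type*} [Field k] [Ring H] [Algebra k H] [Ring A] [Algebra k A]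

/-- `Π^L(h) = ε(1⁽¹⁾h)1⁽²⁾`. -/
noncomputable def piL (W : WeakHopfData k H) (h : H) : H :=
  (TensorProduct.lid k H) ((LinearMap.rTensor H (W.ε ∘ₗ LinearMap.mulRight k h)) (W.Δ 1))

/-- `Π^R(h) = 1⁽¹⁾ε(h1⁽²⁾)`. -/
noncomputable def piR (W : WeakHopfData k H) (h : H) : H :=
  (TensorProduct.rid k H) ((LinearMap.lTensor H (W.ε ∘ₗ LinearMap.mulLeft k h)) (W.Δ 1))

/-- `H^L = im(Π^L)`. -/
def HL (W : WeakHopfData k H) : Set H := Set.range (piL W)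

/-- `H^R = im(Π^R)`. -/
def HR (W : WeakHopfData k H) : Set H := Set.range (piR W)

/-- The axioms of a weak Hopf algebra with bijective antipode, where Sweedler
sums are expressed via arbitrary finite representations of the comultiplication. -/
structure IsWeakHopf (W : WeakHopfData k H) : Prop where
  coassoc : ∀ h : H,
    (TensorProduct.assoc k H H H) ((LinearMap.rTensor H W.Δ) (W.Δ h)) =
      (LinearMap.lTensor H W.Δ) (W.Δ h)
  counit_left : ∀ h : H, (TensorProduct.lid k H) ((LinearMap.rTensor H W.ε) (W.Δ h)) = h
  counit_right : ∀ h : H, (TensorProduct.rid k H) ((LinearMap.lTensor H W.ε) (W.Δ h)) = h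
  comul_mul : ∀ h l : H, W.Δ (h * l) = W.Δ h * W.Δ l
  weak_comul_one₁ : (LinearMap.lTensor H W.Δ) (W.Δ 1) =
    (TensorProduct.assoc k H H H) (W.Δ 1 ⊗ₜ[k] (1 : H)) * ((1 : H) ⊗ₜ[k] W.Δ 1)
  weak_comul_one₂ : (LinearMap.lTensor H W.Δ) (W.Δ 1) =
    ((1 : H) ⊗ₜ[k] W.Δ 1) * (TensorProduct.assoc k H H H) (W.Δ 1 ⊗ₜ[k] (1 : H))
  weak_counit : ∀ h l m : H, ∀ (n : ℕ) (x y : Fin n → H),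
    W.Δ l = ∑ i, x i ⊗ₜ[k] y i →
      W.ε (h * l * m) = ∑ i, W.ε (h * x i) * W.ε (y i * m) ∧
      W.ε (h * l * m) = ∑ i, W.ε (h * y i) * W.ε (x i * m)
  antipode_left : ∀ h : H, ∀ (n : ℕ) (x y : Fin n → H),
    W.Δ h = ∑ i, x i ⊗ₜ[k] y i → ∑ i, x i * W.S (y i) = piL W h
  antipode_right : ∀ h : H, ∀ (n : ℕ) (x y : Fin n → H),
    W.Δ h = ∑ i, x i ⊗ₜ[k] y i → ∑ i, W.S (x i) * y i = piR W h
  antipode_mid : ∀ h : H, ∀ (n : ℕ) (x y : Fin n → H),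
    W.Δ h = ∑ i, x i ⊗ₜ[k] y i →
      ∀ (m : Fin n → ℕ) (u v : (i : Fin n) → Fin (m i) → H),
        (∀ i, W.Δ (y i) = ∑ j, u i j ⊗ₜ[k] v i j) →
          ∑ i, ∑ j, W.S (x i) * u i j * W.S (v i j) = W.S h
  S_Sinv : ∀ h : H, W.S (W.Sinv h) = h
  Sinv_S : ∀ h : H, W.Sinv (W.S h) = h

/-- Condition (1): `h·1_A = Π^L(h)·1_A`. -/
def cond1 (W : WeakHopfData k H) (ρ : H →ₗ[k] A →ₗ[k] A) : Prop :=
  ∀ h : H, ρ h 1 = ρ (piL W h) 1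

/-- Condition (2): `h·(aa') = (h⁽¹⁾·a)(h⁽²⁾·a')`. -/
def cond2 (W : WeakHopfData k H) (ρ : H →ₗ[k] A →ₗ[k] A) : Prop :=
  ∀ (h : H) (a a' : A) (n : ℕ) (x y : Fin n → H),
    W.Δ h = ∑ i, x i ⊗ₜ[k] y i → ρ h (a * a') = ∑ i, ρ (x i) a * ρ (y i) a'

/-- Condition (3): `S⁻¹(l)h·a = (h·a)(l·1_A)` and `lh·a = (l·1_A)(h·a)` for `l ∈ H^L`. -/
def cond3 (W : WeakHopfData k H) (ρ : H →ₗ[k] A →ₗ[k] A) : Prop :=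
  ∀ (h : H) (a : A), ∀ l ∈ HL W,
    ρ (W.Sinv l * h) a = ρ h a * ρ l 1 ∧ ρ (l * h) a = ρ l 1 * ρ h a

/-- Condition (4): `1·a = a`. -/
def cond4 (ρ : H →ₗ[k] A →ₗ[k] A) : Prop := ∀ a : A, ρ 1 a = a

/-- Condition (5). -/
def cond5 (W : WeakHopfData k H) (ρ : H →ₗ[k] A →ₗ[k] A) (σ : H → H → A) : Prop :=
  ∀ (h g : H), ∀ l ∈ HL W,
    σ (l * h) g = ρ l 1 * σ h g ∧ σ (W.Sinv l * h) g = σ h g * ρ l 1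

/-- Condition (6): `(h⁽¹⁾·(l·1_A))σ(h⁽²⁾,k) = σ(h,lk)` for `l ∈ H^L`. -/
def cond6 (W : WeakHopfData k H) (ρ : H →ₗ[k] A →ₗ[k] A) (σ : H → H → A) : Prop :=
  ∀ (h g : H), ∀ l ∈ HL W, ∀ (n : ℕ) (x y : Fin n → H),
    W.Δ h = ∑ i, x i ⊗ₜ[k] y i →
      ∑ i, ρ (x i) (ρ l 1) * σ (y i) g = σ h (l * g)

/-- Condition (7): `σ(1,h) = σ(h,1) = h·1_A`. -/
def cond7 (ρ : H →ₗ[k] A →ₗ[k] A) (σ : H → H → A) : Prop :=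
  ∀ h : H, σ 1 h = ρ h 1 ∧ σ h 1 = ρ h 1

/-- Condition (8), the cocycle condition. -/
def cond8 (W : WeakHopfData k H) (ρ : H →ₗ[k] A →ₗ[k] A) (σ : H → H → A) : Prop :=
  ∀ (h g m : H) (n₁ : ℕ) (x₁ y₁ : Fin n₁ → H) (n₂ : ℕ) (x₂ y₂ : Fin n₂ → H)
    (n₃ : ℕ) (x₃ y₃ : Fin n₃ → H),
    W.Δ h = ∑ i, x₁ i ⊗ₜ[k] y₁ i → W.Δ g = ∑ i, x₂ i ⊗ₜ[k] y₂ i →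
    W.Δ m = ∑ i, x₃ i ⊗ₜ[k] y₃ i →
      ∑ i, ∑ j, ∑ p, ρ (x₁ i) (σ (x₂ j) (x₃ p)) * σ (y₁ i) (y₂ j * y₃ p) =
        ∑ i, ∑ j, σ (x₁ i) (x₂ j) * σ (y₁ i * y₂ j) m

/-- Condition (9), the twisted module condition. -/
def cond9 (W : WeakHopfData k H) (ρ : H →ₗ[k] A →ₗ[k] A) (σ : H → H → A) : Prop :=
  ∀ (h g : H) (a : A) (n : ℕ) (x y : Fin n → H) (m : ℕ) (u v : Fin m → H),
    W.Δ h = ∑ i, x i ⊗ₜ[k] y i → W.Δ g = ∑ j, u j ⊗ₜ[k] v j →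
      ∑ i, ∑ j, ρ (x i) (ρ (u j) a) * σ (y i) (v j) =
        ∑ i, ∑ j, σ (x i) (u j) * ρ (y i * v j) a

/-- Condition (10): `h·(l·1_A) = hl·1_A` for `l ∈ H^L`. -/
def cond10 (W : WeakHopfData k H) (ρ : H →ₗ[k] A →ₗ[k] A) : Prop :=
  ∀ h : H, ∀ l ∈ HL W, ρ h (ρ l 1) = ρ (h * l) 1

/-- Condition (11): `h·(l·1_A) = hl·1_A` for all `h, l ∈ H`. -/
def cond11 (ρ : H →ₗ[k] A →ₗ[k] A) : Prop :=
  ∀ h l : H, ρ h (ρ l 1) = ρ (h * l) 1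

/-- Condition (12): `σ(h,l) = σ(hl,1)` for `l ∈ H^L`. -/
def cond12 (W : WeakHopfData k H) (σ : H → H → A) : Prop :=
  ∀ h : H, ∀ l ∈ HL W, σ h l = σ (h * l) 1

/-- Condition (13). -/
def cond13 (W : WeakHopfData k H) (ρ : H →ₗ[k] A →ₗ[k] A) (σbar : H → H → A) : Prop :=
  ∀ (h g : H) (n : ℕ) (x y : Fin n → H) (m : ℕ) (u v : Fin m → H),
    W.Δ h = ∑ i, x i ⊗ₜ[k] y i → W.Δ g = ∑ j, u j ⊗ₜ[k] v j →
      σbar h g = ∑ i, ∑ j, ρ (x i * u j) 1 * σbar (y i) (v j)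

/-- Condition (14). -/
def cond14 (W : WeakHopfData k H) (ρ : H →ₗ[k] A →ₗ[k] A) (σbar : H → H → A) : Prop :=
  ∀ (h g : H), ∀ l ∈ HL W,
    σbar (l * h) g = ρ l 1 * σbar h g ∧ σbar (W.Sinv l * h) g = σbar h g * ρ l 1

/-- Condition (15). -/
def cond15 (W : WeakHopfData k H) (ρ : H →ₗ[k] A →ₗ[k] A) (σbar : H → H → A) : Prop :=
  ∀ (h g : H), ∀ l ∈ HL W, ∀ (n : ℕ) (x y : Fin n → H),
    W.Δ h = ∑ i, x i ⊗ₜ[k] y i →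
      ∑ i, σbar (x i) g * ρ (y i) (ρ l 1) = σbar h (W.Sinv l * g)

/-- Condition (16). -/
def cond16 (W : WeakHopfData k H) (ρ : H →ₗ[k] A →ₗ[k] A) (σ σbar : H → H → A) : Prop :=
  ∀ (h g : H) (n : ℕ) (x y : Fin n → H) (m : ℕ) (u v : Fin m → H),
    W.Δ h = ∑ i, x i ⊗ₜ[k] y i → W.Δ g = ∑ j, u j ⊗ₜ[k] v j →
      (∑ i, ∑ j, σ (x i) (u j) * σbar (y i) (v j) = ρ h (ρ g 1)) ∧
      (∑ i, ∑ j, σbar (x i) (u j) * σ (y i) (v j) = ρ (h * g) 1)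

/-- Condition (17), the cocycle condition for `ς : H ⊗ H → A`. -/
def cond17 (W : WeakHopfData k H) (ρ : H →ₗ[k] A →ₗ[k] A) (ς : H ⊗[k] H → A) : Prop :=
  ∀ (h g m : H) (n₁ : ℕ) (x₁ y₁ : Fin n₁ → H) (n₂ : ℕ) (x₂ y₂ : Fin n₂ → H)
    (n₃ : ℕ) (x₃ y₃ : Fin n₃ → H),
    W.Δ h = ∑ i, x₁ i ⊗ₜ[k] y₁ i → W.Δ g = ∑ i, x₂ i ⊗ₜ[k] y₂ i →
    W.Δ m = ∑ i, x₃ i ⊗ₜ[k] y₃ i →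
      ∑ i, ∑ j, ∑ p, ρ (x₁ i) (ς (x₂ j ⊗ₜ[k] x₃ p)) * ς (y₁ i ⊗ₜ[k] (y₂ j * y₃ p)) =
        ∑ i, ∑ j, ς (x₁ i ⊗ₜ[k] x₂ j) * ς ((y₁ i * y₂ j) ⊗ₜ[k] m)

/-- Condition (18), the twisted module condition for `ς : H ⊗ H → A`. -/
def cond18 (W : WeakHopfData k H) (ρ : H →ₗ[k] A →ₗ[k] A) (ς : H ⊗[k] H → A) : Prop :=
  ∀ (h g : H) (a : A) (n : ℕ) (x y : Fin n → H) (m : ℕ) (u v : Fin m → H),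
    W.Δ h = ∑ i, x i ⊗ₜ[k] y i → W.Δ g = ∑ j, u j ⊗ₜ[k] v j →
      ∑ i, ∑ j, ρ (x i) (ρ (u j) a) * ς (y i ⊗ₜ[k] v j) =
        ∑ i, ∑ j, ς (x i ⊗ₜ[k] u j) * ρ (y i * v j) a

/-- Condition (19). -/
def cond19 (W : WeakHopfData k H) (ρ : H →ₗ[k] A →ₗ[k] A) (ς : H ⊗[k] H → A) : Prop :=
  ∀ (h g : H) (n : ℕ) (x y : Fin n → H) (m : ℕ) (u v : Fin m → H),
    W.Δ h = ∑ i, x i ⊗ₜ[k] y i → W.Δ g = ∑ j, u j ⊗ₜ[k] v j →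
      ς (h ⊗ₜ[k] g) = ∑ i, ∑ j, ς (x i ⊗ₜ[k] u j) * ρ (y i * v j) 1

/-- Condition (20). -/
def cond20 (W : WeakHopfData k H) (ρ : H →ₗ[k] A →ₗ[k] A) (ς : H ⊗[k] H → A) : Prop :=
  ∀ (h : H) (n : ℕ) (x y : Fin n → H) (m : ℕ) (u v : Fin m → H),
    W.Δ h = ∑ i, x i ⊗ₜ[k] y i → W.Δ 1 = ∑ j, u j ⊗ₜ[k] v j →
      ρ h 1 = ∑ i, ∑ j, ρ (x i) (ρ (u j) 1) * ς (y i ⊗ₜ[k] v j)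

/-- Condition (21). -/
def cond21 (W : WeakHopfData k H) (ρ : H →ₗ[k] A →ₗ[k] A) (ς : H ⊗[k] H → A) : Prop :=
  ∀ (h : H) (m : ℕ) (u v : Fin m → H),
    W.Δ 1 = ∑ j, u j ⊗ₜ[k] v j →
      ρ h 1 = ∑ j, ρ (u j) 1 * ς (v j ⊗ₜ[k] h)

/-- Condition (22): `a(1⁽¹⁾·1_A) ⊗ 1⁽²⁾ = (1⁽¹⁾·a) ⊗ 1⁽²⁾` in `A ⊗ H`. -/
def cond22 (W : WeakHopfData k H) (ρ : H →ₗ[k] A →ₗ[k] A) : Prop :=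
  ∀ (a : A) (m : ℕ) (u v : Fin m → H),
    W.Δ 1 = ∑ j, u j ⊗ₜ[k] v j →
      (∑ j, (a * ρ (u j) 1) ⊗ₜ[k] v j) = ∑ j, (ρ (u j) a) ⊗ₜ[k] v j

/-- Condition (23). -/
def cond23 (W : WeakHopfData k H) (ρ : H →ₗ[k] A →ₗ[k] A) (ςbar : H ⊗[k] H → A) : Prop :=
  ∀ (h g : H) (n : ℕ) (x y : Fin n → H) (m : ℕ) (u v : Fin m → H),
    W.Δ h = ∑ i, x i ⊗ₜ[k] y i → W.Δ g = ∑ j, u j ⊗ₜ[k] v j →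
      ςbar (h ⊗ₜ[k] g) = ∑ i, ∑ j, ρ (x i * u j) 1 * ςbar (y i ⊗ₜ[k] v j)

/-- Condition (24). -/
def cond24 (W : WeakHopfData k H) (ρ : H →ₗ[k] A →ₗ[k] A) (ς ςbar : H ⊗[k] H → A) : Prop :=
  ∀ (h g : H) (n : ℕ) (x y : Fin n → H) (m : ℕ) (u v : Fin m → H),
    W.Δ h = ∑ i, x i ⊗ₜ[k] y i → W.Δ g = ∑ j, u j ⊗ₜ[k] v j →
      (∑ i, ∑ j, ς (x i ⊗ₜ[k] u j) * ςbar (y i ⊗ₜ[k] v j) = ρ (h * g) 1) ∧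
      (∑ i, ∑ j, ςbar (x i ⊗ₜ[k] u j) * ς (y i ⊗ₜ[k] v j) = ρ (h * g) 1)

/-- `σ` is `H^R`-balanced: `σ(hr,k) = σ(h,rk)` for `r ∈ H^R`. -/
def HRBalanced (W : WeakHopfData k H) (σ : H → H → A) : Prop :=
  ∀ (h g : H), ∀ r ∈ HR W, σ (h * r) g = σ h (r * g)

/-- `σbar` is `H^L`-balanced: `σbar(hl,k) = σbar(h,lk)` for `l ∈ H^L`. -/
def HLBalanced (W : WeakHopfData k H) (σbar : H → H → A) : Prop :=
  ∀ (h g : H), ∀ l ∈ HL W, σbar (h * l) g = σbar h (l * g)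

/-- The idempotent `∇ρ : A ⊗ H → A ⊗ H`, `a ⊗ h ↦ a(h⁽¹⁾·1_A) ⊗ h⁽²⁾`. -/
noncomputable def nabla (W : WeakHopfData k H) (ρ : H →ₗ[k] A →ₗ[k] A) :
    A ⊗[k] H →ₗ[k] A ⊗[k] H :=
  (LinearMap.rTensor H (LinearMap.mul' k A ∘ₗ LinearMap.lTensor A (ρ.flip 1))) ∘ₗ
    (TensorProduct.assoc k A H H).symm.toLinearMap ∘ₗ LinearMap.lTensor A W.Δ

/-- The subspace `N` of `A ⊗ H` spanned by the elements
`a(l·1_A) ⊗ h - a ⊗ lh` with `l ∈ H^L`, so that `(A ⊗ H)/N = A ⊗_{H^L} H`. -/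
def relN (W : WeakHopfData k H) (ρ : H →ₗ[k] A →ₗ[k] A) : Submodule k (A ⊗[k] H) :=
  Submodule.span k
    {z | ∃ (a : A) (l h : H), l ∈ HL W ∧ z = (a * ρ l 1) ⊗ₜ[k] h - a ⊗ₜ[k] (l * h)}

/-- The map `σ̃(h,k) := (h⁽¹⁾k⁽¹⁾·1_A)σ̄(h⁽²⁾,k⁽²⁾)`. -/
noncomputable def sigmaTilde (W : WeakHopfData k H) (ρ : H →ₗ[k] A →ₗ[k] A)
    (σbar : H →ₗ[k] H →ₗ[k] A) : H → H → A := fun h g =>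
  LinearMap.mul' k A
    ((TensorProduct.map ((ρ.flip 1) ∘ₗ LinearMap.mul' k H) (TensorProduct.lift σbar))
      ((TensorProduct.tensorTensorTensorComm k H H H H) (W.Δ h ⊗ₜ[k] W.Δ g)))

end

section myaux

theorem my_exists_fin {k M N : Type*} [Field k] [AddCommGroup M] [Module k M]
    [AddCommGroup N] [Module k N] (t : M ⊗[k] N) :
    ∃ (n : ℕ) (x : Fin n → M) (y : Fin n → N), t = ∑ i, x i ⊗ₜ[k] y i := by
  obtain ⟨S, hS⟩ := TensorProduct.exists_finset t
  refine ⟨S.card, fun i => (S.equivFin.symm i).1.1, fun i => (S.equivFin.symm i).1.2, ?_⟩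
  rw [hS, ← Finset.sum_attach S (fun p => p.1 ⊗ₜ[k] p.2)]
  exact Fintype.sum_equiv S.equivFin _ _ (fun p => by simp)

variable {k H : Type*} [Field k] [Ring H] [Algebra k H]

theorem my_piL_eq (W : WeakHopfData k H) {m : ℕ} {u v : Fin m → H}
    (hone : W.Δ 1 = ∑ j, u j ⊗ₜ[k] v j) (h : H) :
    piL W h = ∑ j, W.ε (u j * h) • v j := by
  simp [piL, hone, map_sum]

theorem my_counit_left_rep (W : WeakHopfData k H) (hW : IsWeakHopf W) {n : ℕ}
    {x y : Fin n → H} {g : H} (hg : W.Δ g = ∑ i, x i ⊗ₜ[k] y i) :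
    ∑ i, W.ε (x i) • y i = g := by
  have := hW.counit_left g
  rw [hg] at this
  simpa [map_sum] using this

theorem my_eps_piL (W : WeakHopfData k H) (hW : IsWeakHopf W) (h l : H) :
    W.ε (h * piL W l) = W.ε (h * l) := by
  obtain ⟨m, u, v, hone⟩ := my_exists_fin (W.Δ 1)
  have h2 := (hW.weak_counit h 1 l m u v hone).2
  rw [mul_one] at h2
  rw [my_piL_eq W hone, h2]
  simp [Finset.mul_sum, mul_smul_comm, mul_comm]

theorem my_piL_piL (W : WeakHopfData k H) (hW : IsWeakHopf W) (h l : H) :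
    piL W (h * piL W l) = piL W (h * l) := by
  obtain ⟨m, u, v, hone⟩ := my_exists_fin (W.Δ 1)
  rw [my_piL_eq W hone (h * piL W l), my_piL_eq W hone (h * l)]
  simp only [← mul_assoc]
  simp only [my_eps_piL W hW]

theorem my_sum_piL_mul (W : WeakHopfData k H) (hW : IsWeakHopf W) {m : ℕ}
    {u v : Fin m → H} {g : H} (hg : W.Δ g = ∑ j, u j ⊗ₜ[k] v j) :
    ∑ j, piL W (u j) * v j = g := by
  obtain ⟨n, p, q, hone⟩ := my_exists_fin (W.Δ 1)
  have hΔ : W.Δ g = ∑ s, ∑ j, (p s * u j) ⊗ₜ[k] (q s * v j) := by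
    calc W.Δ g = W.Δ (1 * g) := by rw [one_mul]
    _ = W.Δ 1 * W.Δ g := hW.comul_mul 1 g
    _ = ∑ s, ∑ j, (p s * u j) ⊗ₜ[k] (q s * v j) := by
        rw [hone, hg, Finset.sum_mul_sum]
        simp [Algebra.TensorProduct.tmul_mul_tmul]
  have hc := hW.counit_left g
  rw [hΔ] at hc
  simp only [map_sum, LinearMap.rTensor_tmul, TensorProduct.lid_tmul] at hc
  calc ∑ j, piL W (u j) * v j = ∑ j, ∑ s, W.ε (p s * u j) • (q s * v j) := by
        simp only [my_piL_eq W hone, Finset.sum_mul, smul_mul_assoc]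
    _ = g := by rw [Finset.sum_comm]; exact hc

end myaux

theorem my_equiv_sum {k M N : Type*} [Field k] [AddCommGroup M] [Module k M]
    [AddCommGroup N] [Module k N] (e : M ≃ₗ[k] N) {ι : Type*} (s : Finset ι) (f : ι → M) :
    e (∑ i ∈ s, f i) = ∑ i ∈ s, e (f i) :=
  map_sum e.toLinearMap f s

theorem my_F {k H : Type*} [Field k] [Ring H] [Algebra k H]
    {M : Type*} [AddCommGroup M] [Module k M]
    (W : WeakHopfData k H) (hW : IsWeakHopf W) {m : ℕ} {u v : Fin m → H}
    (hone : W.Δ 1 = ∑ j, u j ⊗ₜ[k] v j) (B : H →ₗ[k] H →ₗ[k] M) :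
    ∑ j, B (u j) (piL W (v j)) = ∑ j, B (u j) (v j) := by
  classical
  let T3 : H →ₗ[k] H →ₗ[k] H →ₗ[k] M :=
    LinearMap.mk₂ k (fun x y => W.ε y • B x)
      (fun x x' y => by simp [map_add, smul_add])
      (fun c x y => by simp only [map_smul]; rw [smul_comm])
      (fun x y y' => by simp [map_add, add_smul])
      (fun c x y => by simp [map_smul, smul_eq_mul, mul_smul])
  let L : H ⊗[k] (H ⊗[k] H) →ₗ[k] M :=
    TensorProduct.lift ((TensorProduct.uncurry (RingHom.id k) H H M) ∘ₗ T3)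
  have hL : ∀ x y z : H, L (x ⊗ₜ[k] (y ⊗ₜ[k] z)) = W.ε y • B x z := by
    intro x y z
    simp [L, T3, TensorProduct.uncurry_apply]
  choose nn p q hpq using fun j => my_exists_fin (W.Δ (v j))
  have e1 : (LinearMap.lTensor H W.Δ) (W.Δ 1) = ∑ j, ∑ t, u j ⊗ₜ[k] (p j t ⊗ₜ[k] q j t) := by
    rw [hone, map_sum]
    apply Finset.sum_congr rfl
    intro j _
    rw [LinearMap.lTensor_tmul, hpq j, TensorProduct.tmul_sum]
  have e2 : ((1 : H) ⊗ₜ[k] W.Δ 1) * (TensorProduct.assoc k H H H) (W.Δ 1 ⊗ₜ[k] (1 : H)) =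
      ∑ s, ∑ j, u j ⊗ₜ[k] ((u s * v j) ⊗ₜ[k] v s) := by
    conv_lhs => rw [hone]
    rw [TensorProduct.tmul_sum, TensorProduct.sum_tmul,
      my_equiv_sum (TensorProduct.assoc k H H H) _, Finset.sum_mul_sum]
    simp [TensorProduct.assoc_tmul, Algebra.TensorProduct.tmul_mul_tmul]
  have key := congrArg L ((e1.symm.trans hW.weak_comul_one₂).trans e2)
  simp only [map_sum, hL] at key
  calc ∑ j, B (u j) (piL W (v j)) = ∑ j, ∑ s, W.ε (u s * v j) • B (u j) (v s) := by
        simp only [my_piL_eq W hone, map_sum, map_smul]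
    _ = ∑ s, ∑ j, W.ε (u s * v j) • B (u j) (v s) := Finset.sum_comm
    _ = ∑ j, ∑ t, W.ε (p j t) • B (u j) (q j t) := key.symm
    _ = ∑ j, B (u j) (∑ t, W.ε (p j t) • q j t) := by simp [map_sum, map_smul]
    _ = ∑ j, B (u j) (v j) := by
        apply Finset.sum_congr rfl
        intro j _
        rw [my_counit_left_rep W hW (hpq j)]

theorem my_G {k H : Type*} [Field k] [Ring H] [Algebra k H]
    {M : Type*} [AddCommGroup M] [Module k M]
    (W : WeakHopfData k H) (hW : IsWeakHopf W) {m : ℕ} {u v : Fin m → H}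
    (hone : W.Δ 1 = ∑ j, u j ⊗ₜ[k] v j) {nn : Fin m → ℕ}
    {p q : (j : Fin m) → Fin (nn j) → H}
    (hpq : ∀ j, W.Δ (u j) = ∑ t, p j t ⊗ₜ[k] q j t)
    (C : H →ₗ[k] H →ₗ[k] H →ₗ[k] M) :
    ∑ j, ∑ t, C (p j t) (q j t) (v j) = ∑ s, ∑ j, C (u s) (v s * u j) (v j) := by
  let L : H ⊗[k] (H ⊗[k] H) →ₗ[k] M :=
    TensorProduct.lift ((TensorProduct.uncurry (RingHom.id k) H H M) ∘ₗ C)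
  have hL : ∀ x y z : H, L (x ⊗ₜ[k] (y ⊗ₜ[k] z)) = C x y z := by
    intro x y z
    simp [L, TensorProduct.uncurry_apply]
  have hco := (hW.coassoc 1).trans hW.weak_comul_one₁
  have e1 : (TensorProduct.assoc k H H H) ((LinearMap.rTensor H W.Δ) (W.Δ 1)) =
      ∑ j, ∑ t, p j t ⊗ₜ[k] (q j t ⊗ₜ[k] v j) := by
    rw [hone, map_sum, my_equiv_sum (TensorProduct.assoc k H H H) _]
    apply Finset.sum_congr rfl
    intro j _
    rw [LinearMap.rTensor_tmul, hpq j, TensorProduct.sum_tmul,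
      my_equiv_sum (TensorProduct.assoc k H H H) _]
    simp [TensorProduct.assoc_tmul]
  have e2 : (TensorProduct.assoc k H H H) (W.Δ 1 ⊗ₜ[k] (1 : H)) * ((1 : H) ⊗ₜ[k] W.Δ 1) =
      ∑ s, ∑ j, u s ⊗ₜ[k] ((v s * u j) ⊗ₜ[k] v j) := by
    conv_lhs => rw [hone]
    rw [TensorProduct.sum_tmul, my_equiv_sum (TensorProduct.assoc k H H H) _,
      TensorProduct.tmul_sum, Finset.sum_mul_sum]
    simp [TensorProduct.assoc_tmul, Algebra.TensorProduct.tmul_mul_tmul]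
  have key := congrArg L ((e1.symm.trans hco).trans e2)
  simpa only [map_sum, hL] using key

/-- main theorem, first direction: if `ρ` and the `H^R`-balanced
bilinear map `σ` satisfy conditions (1)–(10), then, with `ς(h⊗k) := σ(h,k)`,
the maps `ρ` and `ς` satisfy conditions (2), (4), (11) and (17)–(22). -/
theorem statement6 {k H A : Type*} [Field k] [Ring H] [Algebra k H] [Ring A] [Algebra k A]
    (W : WeakHopfData k H) (hW : IsWeakHopf W) (ρ : H →ₗ[k] A →ₗ[k] A)
    (σb : H →ₗ[k] H →ₗ[k] A) (hbal : HRBalanced W (fun h g => σb h g))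
    (h1 : cond1 W ρ) (h2 : cond2 W ρ) (h3 : cond3 W ρ) (h4 : cond4 ρ)
    (h5 : cond5 W ρ (fun h g => σb h g)) (h6 : cond6 W ρ (fun h g => σb h g))
    (h7 : cond7 ρ (fun h g => σb h g)) (h8 : cond8 W ρ (fun h g => σb h g))
    (h9 : cond9 W ρ (fun h g => σb h g)) (h10 : cond10 W ρ) :
    cond2 W ρ ∧ cond4 ρ ∧ cond11 ρ ∧
      cond17 W ρ ⇑(TensorProduct.lift σb) ∧ cond18 W ρ ⇑(TensorProduct.lift σb) ∧
      cond19 W ρ ⇑(TensorProduct.lift σb) ∧ cond20 W ρ ⇑(TensorProduct.lift σb) ∧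
      cond21 W ρ ⇑(TensorProduct.lift σb) ∧ cond22 W ρ := by
  refine ⟨h2, h4, ?_, ?_, ?_, ?_, ?_, ?_, ?_⟩
  · -- cond11
    intro h l
    rw [h1 l, h10 h _ ⟨l, rfl⟩, h1 (h * piL W l), my_piL_piL W hW, ← h1 (h * l)]
  · -- cond17
    intro h g m n₁ x₁ y₁ n₂ x₂ y₂ n₃ x₃ y₃ hh hg hm
    simpa only [TensorProduct.lift.tmul] using h8 h g m n₁ x₁ y₁ n₂ x₂ y₂ n₃ x₃ y₃ hh hg hm
  · -- cond18
    intro h g a n x y m u v hh hg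
    simpa only [TensorProduct.lift.tmul] using h9 h g a n x y m u v hh hg
  · -- cond19
    intro h g n x y m u v hh hg
    simp only [TensorProduct.lift.tmul]
    have H9 : ∑ i, ∑ j, ρ (x i) (ρ (u j) 1) * σb (y i) (v j)
        = ∑ i, ∑ j, σb (x i) (u j) * ρ (y i * v j) 1 := h9 h g 1 n x y m u v hh hg
    rw [← H9, Finset.sum_comm]
    have step : ∀ j, ∑ i, ρ (x i) (ρ (u j) 1) * σb (y i) (v j)
        = σb h (piL W (u j) * v j) := by
      intro j
      have h6' : ∑ i, ρ (x i) (ρ (piL W (u j)) 1) * σb (y i) (v j)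
          = σb h (piL W (u j) * v j) := h6 h (v j) (piL W (u j)) ⟨u j, rfl⟩ n x y hh
      rw [← h6']
      simp only [h1 (u j)]
    rw [Finset.sum_congr rfl fun j _ => step j, ← map_sum, my_sum_piL_mul W hW hg]
  · -- cond20
    intro h n x y m u v hh hone
    simp only [TensorProduct.lift.tmul]
    rw [Finset.sum_comm]
    have step : ∀ j, ∑ i, ρ (x i) (ρ (u j) 1) * σb (y i) (v j)
        = σb h (piL W (u j) * v j) := by
      intro j
      have h6' : ∑ i, ρ (x i) (ρ (piL W (u j)) 1) * σb (y i) (v j)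
          = σb h (piL W (u j) * v j) := h6 h (v j) (piL W (u j)) ⟨u j, rfl⟩ n x y hh
      rw [← h6']
      simp only [h1 (u j)]
    rw [Finset.sum_congr rfl fun j _ => step j, ← map_sum, my_sum_piL_mul W hW hone]
    exact ((h7 h).2).symm
  · -- cond21
    intro h m u v hone
    simp only [TensorProduct.lift.tmul]
    have step : ∀ j, ρ (u j) 1 * σb (v j) h = σb (piL W (u j) * v j) h := by
      intro j
      have h5' : σb (piL W (u j) * v j) h = ρ (piL W (u j)) 1 * σb (v j) h :=
        (h5 (v j) h (piL W (u j)) ⟨u j, rfl⟩).1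
      rw [h5', ← h1 (u j)]
    rw [Finset.sum_congr rfl fun j _ => step j, ← LinearMap.sum_apply, ← map_sum,
      my_sum_piL_mul W hW hone]
    exact ((h7 h).1).symm
  · -- cond22
    intro a m u v hone
    choose nn p q hpq using fun j => my_exists_fin (W.Δ (u j))
    have hRj : ∀ j, ρ (u j) a = ∑ t, ρ (p j t) a * ρ (q j t) 1 := by
      intro j
      have := h2 (u j) a 1 (nn j) (p j) (q j) (hpq j)
      rwa [mul_one] at this
    let Cb : H →ₗ[k] H →ₗ[k] A := LinearMap.mk₂ k (fun x y => ρ x a * ρ y 1)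
      (fun x x' y => by simp [add_mul])
      (fun c x y => by simp [smul_mul_assoc])
      (fun x y y' => by simp [mul_add])
      (fun c x y => by simp [mul_smul_comm])
    let C : H →ₗ[k] H →ₗ[k] H →ₗ[k] A ⊗[k] H := Cb.compr₂ (TensorProduct.mk k A H)
    have hC : ∀ x y z : H, C x y z = (ρ x a * ρ y 1) ⊗ₜ[k] z := fun x y z => rfl
    have hG := my_G W hW hone hpq C
    simp only [hC] at hG
    have ha : a = ∑ s, ρ (u s) a * ρ (v s) 1 := by
      have := h2 1 a 1 m u v hone
      rwa [mul_one, h4 a] at this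
    let B1 : H →ₗ[k] H →ₗ[k] A ⊗[k] H := LinearMap.mk₂ k
      (fun x y => ∑ j, (ρ x a * (ρ y 1 * ρ (u j) 1)) ⊗ₜ[k] v j)
      (fun x x' y => by
        simp [add_mul, TensorProduct.add_tmul, Finset.sum_add_distrib])
      (fun c x y => by
        simp [smul_mul_assoc, TensorProduct.smul_tmul', Finset.smul_sum])
      (fun x y y' => by
        simp [add_mul, mul_add, TensorProduct.add_tmul, Finset.sum_add_distrib])
      (fun c x y => by
        simp [smul_mul_assoc, mul_smul_comm, TensorProduct.smul_tmul', Finset.smul_sum])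
    let B2 : H →ₗ[k] H →ₗ[k] A ⊗[k] H := LinearMap.mk₂ k
      (fun x y => ∑ j, (ρ x a * ρ (y * u j) 1) ⊗ₜ[k] v j)
      (fun x x' y => by
        simp [add_mul, TensorProduct.add_tmul, Finset.sum_add_distrib])
      (fun c x y => by
        simp [smul_mul_assoc, TensorProduct.smul_tmul', Finset.smul_sum])
      (fun x y y' => by
        simp [add_mul, mul_add, TensorProduct.add_tmul, Finset.sum_add_distrib])
      (fun c x y => by
        simp [smul_mul_assoc, mul_smul_comm, TensorProduct.smul_tmul', Finset.smul_sum])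
    have hF1 := my_F W hW hone B1
    have hF2 := my_F W hW hone B2
    have h12 : ∀ s, B1 (u s) (piL W (v s)) = B2 (u s) (piL W (v s)) := by
      intro s
      simp only [B1, B2, LinearMap.mk₂_apply]
      apply Finset.sum_congr rfl
      intro j _
      have h3' : ρ (piL W (v s) * u j) 1 = ρ (piL W (v s)) 1 * ρ (u j) 1 :=
        (h3 (u j) 1 _ ⟨v s, rfl⟩).2
      rw [h3']
    calc ∑ j, (a * ρ (u j) 1) ⊗ₜ[k] v j
        = ∑ j, ∑ s, (ρ (u s) a * (ρ (v s) 1 * ρ (u j) 1)) ⊗ₜ[k] v j := by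
          apply Finset.sum_congr rfl
          intro j _
          conv_lhs => rw [ha]
          rw [Finset.sum_mul, TensorProduct.sum_tmul]
          simp [mul_assoc]
      _ = ∑ s, ∑ j, (ρ (u s) a * (ρ (v s) 1 * ρ (u j) 1)) ⊗ₜ[k] v j := Finset.sum_comm
      _ = ∑ s, B1 (u s) (v s) := by simp only [B1, LinearMap.mk₂_apply]
      _ = ∑ s, B1 (u s) (piL W (v s)) := hF1.symm
      _ = ∑ s, B2 (u s) (piL W (v s)) := Finset.sum_congr rfl fun s _ => h12 s
      _ = ∑ s, B2 (u s) (v s) := hF2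
      _ = ∑ s, ∑ j, (ρ (u s) a * ρ (v s * u j) 1) ⊗ₜ[k] v j := by
          simp only [B2, LinearMap.mk₂_apply]
      _ = ∑ j, ∑ t, (ρ (p j t) a * ρ (q j t) 1) ⊗ₜ[k] v j := hG.symm
      _ = ∑ j, (ρ (u j) a) ⊗ₜ[k] v j := by
          apply Finset.sum_congr rfl
          intro j _
          rw [hRj j, TensorProduct.sum_tmul]
end

section
/- Let ς:H⊗H→A be a k-linear map such that ρ and ς satisfy conditions (2), (4), (11) and (17)–(22). Then for all h,k ∈ H: (h⁽¹⁾·1_A)ς(h⁽²⁾⊗k) = ς(h⊗k) and ς(h⁽¹⁾⊗k)(h⁽²⁾·1_A) = ς(h⊗k). -/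
open scoped TensorProduct

section Aux
variable {k H A : Type*} [Field k] [Ring H] [Algebra k H] [Ring A] [Algebra k A]

private lemma exists_fin_rep {M N : Type*} [AddCommMonoid M] [AddCommMonoid N]
    [Module k M] [Module k N] (z : M ⊗[k] N) :
    ∃ (n : ℕ) (x : Fin n → M) (y : Fin n → N), z = ∑ i, x i ⊗ₜ[k] y i := by
  obtain ⟨S, hS⟩ := TensorProduct.exists_finset z
  refine ⟨S.card, fun i => ((S.equivFin.symm i) : M × N).1,
    fun i => ((S.equivFin.symm i) : M × N).2, ?_⟩
  rw [hS]
  rw [← Finset.sum_coe_sort S (fun p => p.1 ⊗ₜ[k] p.2)]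
  exact (Equiv.sum_comp S.equivFin.symm (fun a => (a : M × N).1 ⊗ₜ[k] (a : M × N).2)).symm

private lemma sum_bilin_congr {ι₁ ι₂ M N P : Type*} [AddCommMonoid M] [AddCommMonoid N]
    [AddCommMonoid P] [Module k M] [Module k N] [Module k P]
    (φ : M →ₗ[k] N →ₗ[k] P) {s₁ : Finset ι₁} {s₂ : Finset ι₂}
    {f₁ : ι₁ → M} {g₁ : ι₁ → N} {f₂ : ι₂ → M} {g₂ : ι₂ → N}
    (h : ∑ i ∈ s₁, f₁ i ⊗ₜ[k] g₁ i = ∑ i ∈ s₂, f₂ i ⊗ₜ[k] g₂ i) :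
    ∑ i ∈ s₁, φ (f₁ i) (g₁ i) = ∑ i ∈ s₂, φ (f₂ i) (g₂ i) := by
  simpa using congrArg (TensorProduct.lift φ) h

private noncomputable def lift3 {M N P Q : Type*} [AddCommMonoid M] [AddCommMonoid N]
    [AddCommMonoid P] [AddCommMonoid Q] [Module k M] [Module k N] [Module k P] [Module k Q]
    (φ : M →ₗ[k] N →ₗ[k] P →ₗ[k] Q) : M ⊗[k] (N ⊗[k] P) →ₗ[k] Q :=
  TensorProduct.lift ((TensorProduct.lift.equiv (RingHom.id k) N P Q).toLinearMap ∘ₗ φ)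

@[simp] private lemma lift3_tmul {M N P Q : Type*} [AddCommMonoid M] [AddCommMonoid N]
    [AddCommMonoid P] [AddCommMonoid Q] [Module k M] [Module k N] [Module k P] [Module k Q]
    (φ : M →ₗ[k] N →ₗ[k] P →ₗ[k] Q) (m : M) (n : N) (p : P) :
    lift3 φ (m ⊗ₜ[k] (n ⊗ₜ[k] p)) = φ m n p := by
  simp [lift3, TensorProduct.lift.equiv]

private noncomputable def mul3 (k A : Type*) [Field k] [Ring A] [Algebra k A] :
    A →ₗ[k] A →ₗ[k] A →ₗ[k] A :=
  (LinearMap.mul k A).compr₂ (LinearMap.mul k A)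

@[simp] private lemma mul3_apply (a b c : A) : mul3 k A a b c = a * b * c := by
  simp [mul3]

private noncomputable def tri3 (f g h : H →ₗ[k] A) : H →ₗ[k] H →ₗ[k] H →ₗ[k] A :=
  (((mul3 k A).comp f).compl₂ g).compr₂ (LinearMap.lcomp k A h)

@[simp] private lemma tri3_apply (f g h : H →ₗ[k] A) (α β γ : H) :
    tri3 f g h α β γ = f α * g β * h γ := by
  simp [tri3]

/-- `z ↦ ς (z ⊗ₜ w)` as a linear map. -/
private noncomputable def ctm (ς : H ⊗[k] H →ₗ[k] A) (w : H) : H →ₗ[k] A :=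
  ς ∘ₗ (TensorProduct.mk k H H).flip w

@[simp] private lemma ctm_apply (ς : H ⊗[k] H →ₗ[k] A) (w z : H) :
    ctm ς w z = ς (z ⊗ₜ[k] w) := rfl

end Aux
section Lemmas
variable {k H A : Type*} [Field k] [Ring H] [Algebra k H] [Ring A] [Algebra k A]

private lemma sigma_one_tmul (W : WeakHopfData k H) (ρ : H →ₗ[k] A →ₗ[k] A)
    (ς : H ⊗[k] H →ₗ[k] A) (h2 : cond2 W ρ) (h18 : cond18 W ρ ⇑ς) (h19 : cond19 W ρ ⇑ς)
    (h21 : cond21 W ρ ⇑ς) (h22 : cond22 W ρ) (x : H) :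
    ς ((1 : H) ⊗ₜ[k] x) = ρ x 1 := by
  obtain ⟨m₀, u, v, h1⟩ := exists_fin_rep (W.Δ 1)
  obtain ⟨n, xs, ys, hx⟩ := exists_fin_rep (W.Δ x)
  have e19 : ς ((1:H) ⊗ₜ[k] x) = ∑ j, ∑ i, ς (u j ⊗ₜ[k] xs i) * ρ (v j * ys i) 1 :=
    h19 1 x m₀ u v n xs ys h1 hx
  have e18 : (∑ j, ∑ i, ρ (u j) (ρ (xs i) 1) * ς (v j ⊗ₜ[k] ys i)) =
      ∑ j, ∑ i, ς (u j ⊗ₜ[k] xs i) * ρ (v j * ys i) 1 := by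
    simpa using h18 1 x 1 m₀ u v n xs ys h1 hx
  have key : ∀ i, (∑ j, ρ (u j) (ρ (xs i) 1) * ς (v j ⊗ₜ[k] ys i)) =
      ρ (xs i) 1 * ρ (ys i) 1 := by
    intro i
    have h22i := h22 (ρ (xs i) 1) m₀ u v h1
    have push := sum_bilin_congr ((LinearMap.mul k A).compl₂ (ctm ς (ys i))) h22i
    simp only [LinearMap.compl₂_apply, LinearMap.mul_apply', ctm_apply] at push
    calc (∑ j, ρ (u j) (ρ (xs i) 1) * ς (v j ⊗ₜ[k] ys i))
        = ∑ j, ρ (xs i) 1 * ρ (u j) 1 * ς (v j ⊗ₜ[k] ys i) := push.symm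
      _ = ρ (xs i) 1 * ∑ j, ρ (u j) 1 * ς (v j ⊗ₜ[k] ys i) := by
          simp [Finset.mul_sum, mul_assoc]
      _ = ρ (xs i) 1 * ρ (ys i) 1 := by rw [← h21 (ys i) m₀ u v h1]
  calc ς ((1:H) ⊗ₜ[k] x) = ∑ j, ∑ i, ς (u j ⊗ₜ[k] xs i) * ρ (v j * ys i) 1 := e19
    _ = ∑ j, ∑ i, ρ (u j) (ρ (xs i) 1) * ς (v j ⊗ₜ[k] ys i) := e18.symm
    _ = ∑ i, ∑ j, ρ (u j) (ρ (xs i) 1) * ς (v j ⊗ₜ[k] ys i) := Finset.sum_comm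
    _ = ∑ i, ρ (xs i) 1 * ρ (ys i) 1 := by simp only [key]
    _ = ρ x (1 * 1) := (h2 x 1 1 n xs ys hx).symm
    _ = ρ x 1 := by rw [one_mul]

end Lemmas
section Lemmas2
variable {k H A : Type*} [Field k] [Ring H] [Algebra k H] [Ring A] [Algebra k A]

set_option maxHeartbeats 1000000 in
set_option synthInstance.maxHeartbeats 200000 in
private lemma claim_two (W : WeakHopfData k H) (hW : IsWeakHopf W) (ρ : H →ₗ[k] A →ₗ[k] A)
    (ς : H ⊗[k] H →ₗ[k] A) (h2 : cond2 W ρ) (h11 : cond11 ρ) (h19 : cond19 W ρ ⇑ς)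
    (h g : H) (n : ℕ) (x y : Fin n → H) (hx : W.Δ h = ∑ i, x i ⊗ₜ[k] y i) :
    (∑ i, ς (x i ⊗ₜ[k] g) * ρ (y i) 1) = ς (h ⊗ₜ[k] g) := by
  obtain ⟨mg, c, d, hg⟩ := exists_fin_rep (W.Δ g)
  choose mp p q hpq using fun i => exists_fin_rep (W.Δ (x i))
  choose mr r s hrs using fun i => exists_fin_rep (W.Δ (y i))
  -- coassociativity in representation form
  have E2 : (∑ i, ∑ t, p i t ⊗ₜ[k] (q i t ⊗ₜ[k] y i)) =
      ∑ i, ∑ t, x i ⊗ₜ[k] (r i t ⊗ₜ[k] s i t) := by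
    have hc := hW.coassoc h
    rw [hx] at hc
    simp only [map_sum, LinearMap.rTensor_tmul, LinearMap.lTensor_tmul, hpq, hrs,
      TensorProduct.sum_tmul, TensorProduct.tmul_sum, TensorProduct.assoc_tmul] at hc
    exact hc
  -- the trilinear map
  set T : H →ₗ[k] H →ₗ[k] H →ₗ[k] A :=
    ∑ j, tri3 (ctm ς (c j)) ((ρ.flip 1) ∘ₗ LinearMap.mulRight k (d j)) (ρ.flip 1) with hT
  have hTval : ∀ α β γ, T α β γ = ∑ j, ς (α ⊗ₜ[k] c j) * ρ (β * d j) 1 * ρ γ 1 := by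
    intro α β γ
    simp [hT, LinearMap.sum_apply, Finset.sum_apply]
  calc (∑ i, ς (x i ⊗ₜ[k] g) * ρ (y i) 1)
      = ∑ i, ∑ t, ∑ j, ς (p i t ⊗ₜ[k] c j) * ρ (q i t * d j) 1 * ρ (y i) 1 := by
        refine Finset.sum_congr rfl fun i _ => ?_
        rw [h19 (x i) g _ (p i) (q i) _ c d (hpq i) hg]
        simp [Finset.sum_mul]
    _ = ∑ i, ∑ t, T (p i t) (q i t) (y i) := by
        refine Finset.sum_congr rfl fun i _ => Finset.sum_congr rfl fun t _ => ?_
        rw [hTval]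
    _ = lift3 T (∑ i, ∑ t, p i t ⊗ₜ[k] (q i t ⊗ₜ[k] y i)) := by simp
    _ = lift3 T (∑ i, ∑ t, x i ⊗ₜ[k] (r i t ⊗ₜ[k] s i t)) := by rw [E2]
    _ = ∑ i, ∑ t, ∑ j, ς (x i ⊗ₜ[k] c j) * ρ (r i t * d j) 1 * ρ (s i t) 1 := by
        simp only [map_sum, lift3_tmul]
        exact Finset.sum_congr rfl fun i _ => Finset.sum_congr rfl fun t _ => hTval _ _ _
    _ = ∑ i, ∑ j, ς (x i ⊗ₜ[k] c j) * ρ (y i * d j) 1 := by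
        refine Finset.sum_congr rfl fun i _ => ?_
        rw [Finset.sum_comm]
        refine Finset.sum_congr rfl fun j _ => ?_
        have hcomb : ρ (y i) (ρ (d j) 1 * 1) = ∑ t, ρ (r i t) (ρ (d j) 1) * ρ (s i t) 1 :=
          h2 (y i) (ρ (d j) 1) 1 _ (r i) (s i) (hrs i)
        rw [mul_one] at hcomb
        calc (∑ t, ς (x i ⊗ₜ[k] c j) * ρ (r i t * d j) 1 * ρ (s i t) 1)
            = ς (x i ⊗ₜ[k] c j) * ∑ t, ρ (r i t) (ρ (d j) 1) * ρ (s i t) 1 := by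
              simp only [Finset.mul_sum]
              refine Finset.sum_congr rfl fun t _ => ?_
              rw [h11 (r i t) (d j), mul_assoc]
          _ = ς (x i ⊗ₜ[k] c j) * ρ (y i * d j) 1 := by rw [← hcomb, h11]
    _ = ς (h ⊗ₜ[k] g) := (h19 h g n x y mg c d hx hg).symm

end Lemmas2
section Lemmas3
variable {k H A : Type*} [Field k] [Ring H] [Algebra k H] [Ring A] [Algebra k A]

set_option maxHeartbeats 1000000 in
set_option synthInstance.maxHeartbeats 200000 in
private lemma lemB (W : WeakHopfData k H) (ρ : H →ₗ[k] A →ₗ[k] A)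
    (ς : H ⊗[k] H →ₗ[k] A) (h17 : cond17 W ρ ⇑ς) (h19 : cond19 W ρ ⇑ς)
    (h21 : cond21 W ρ ⇑ς) (h22 : cond22 W ρ)
    (m₀ : ℕ) (u v : Fin m₀ → H) (h1 : W.Δ 1 = ∑ j, u j ⊗ₜ[k] v j)
    (h g : H) (n : ℕ) (x y : Fin n → H) (hx : W.Δ h = ∑ i, x i ⊗ₜ[k] y i) :
    ς (h ⊗ₜ[k] g) = ∑ j, ∑ i, ς (u j ⊗ₜ[k] x i) * ς ((v j * y i) ⊗ₜ[k] g) := by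
  obtain ⟨mg, c, d, hg⟩ := exists_fin_rep (W.Δ g)
  have e17 := h17 1 h g m₀ u v n x y mg c d h1 hx hg
  rw [← e17]
  -- now show LHS sum equals ς (h ⊗ₜ g)
  have inner : ∀ (i : Fin n) (pp : Fin mg),
      (∑ j, ρ (u j) (ς (x i ⊗ₜ[k] c pp)) * ς (v j ⊗ₜ[k] (y i * d pp))) =
      ς (x i ⊗ₜ[k] c pp) * ρ (y i * d pp) 1 := by
    intro i pp
    have h22i := h22 (ς (x i ⊗ₜ[k] c pp)) m₀ u v h1
    have push := sum_bilin_congr ((LinearMap.mul k A).compl₂ (ctm ς (y i * d pp))) h22i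
    simp only [LinearMap.compl₂_apply, LinearMap.mul_apply', ctm_apply] at push
    calc (∑ j, ρ (u j) (ς (x i ⊗ₜ[k] c pp)) * ς (v j ⊗ₜ[k] (y i * d pp)))
        = ∑ j, ς (x i ⊗ₜ[k] c pp) * ρ (u j) 1 * ς (v j ⊗ₜ[k] (y i * d pp)) := push.symm
      _ = ς (x i ⊗ₜ[k] c pp) * ∑ j, ρ (u j) 1 * ς (v j ⊗ₜ[k] (y i * d pp)) := by
          simp [Finset.mul_sum, mul_assoc]
      _ = ς (x i ⊗ₜ[k] c pp) * ρ (y i * d pp) 1 := by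
          rw [← h21 (y i * d pp) m₀ u v h1]
  refine Eq.symm ?_
  calc (∑ j, ∑ i, ∑ pp, ρ (u j) (ς (x i ⊗ₜ[k] c pp)) * ς (v j ⊗ₜ[k] (y i * d pp)))
      = ∑ i, ∑ pp, ∑ j, ρ (u j) (ς (x i ⊗ₜ[k] c pp)) * ς (v j ⊗ₜ[k] (y i * d pp)) := by
        rw [Finset.sum_comm]
        exact Finset.sum_congr rfl fun i _ => Finset.sum_comm
    _ = ∑ i, ∑ pp, ς (x i ⊗ₜ[k] c pp) * ρ (y i * d pp) 1 := by
        exact Finset.sum_congr rfl fun i _ => Finset.sum_congr rfl fun pp _ => inner i pp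
    _ = ς (h ⊗ₜ[k] g) := (h19 h g n x y mg c d hx hg).symm

end Lemmas3
section Lemmas4
variable {k H A : Type*} [Field k] [Ring H] [Algebra k H] [Ring A] [Algebra k A]

set_option maxHeartbeats 2000000 in
set_option synthInstance.maxHeartbeats 400000 in
private lemma claim_one (W : WeakHopfData k H) (hW : IsWeakHopf W) (ρ : H →ₗ[k] A →ₗ[k] A)
    (ς : H ⊗[k] H →ₗ[k] A) (h2 : cond2 W ρ) (h11 : cond11 ρ) (h17 : cond17 W ρ ⇑ς)
    (h18 : cond18 W ρ ⇑ς) (h19 : cond19 W ρ ⇑ς) (h21 : cond21 W ρ ⇑ς) (h22 : cond22 W ρ)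
    (h g : H) (n : ℕ) (x y : Fin n → H) (hx : W.Δ h = ∑ i, x i ⊗ₜ[k] y i) :
    (∑ i, ρ (x i) 1 * ς (y i ⊗ₜ[k] g)) = ς (h ⊗ₜ[k] g) := by
  obtain ⟨m₀, u, v, h1⟩ := exists_fin_rep (W.Δ 1)
  choose ma a b hab using fun j => exists_fin_rep (W.Δ (u j))
  choose mp p q hpq using fun i => exists_fin_rep (W.Δ (x i))
  have hB := lemB W ρ ς h17 h19 h21 h22 m₀ u v h1 h g n x y hx
  -- representation form of `(id ⊗ Δ)(Δ 1) = (1 ⊗ Δ1)(Δ1 ⊗ 1)` applied on `(Δ ⊗ id)(Δ 1)`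
  have E3 : (∑ j, ∑ t, a j t ⊗ₜ[k] (b j t ⊗ₜ[k] v j)) =
      ∑ j, ∑ pp, u j ⊗ₜ[k] ((u pp * v j) ⊗ₜ[k] v pp) := by
    have hc := hW.coassoc 1
    rw [hW.weak_comul_one₂] at hc
    rw [h1] at hc
    simp only [map_sum, LinearMap.rTensor_tmul, hab, TensorProduct.sum_tmul,
      TensorProduct.tmul_sum, TensorProduct.assoc_tmul] at hc
    rw [Finset.sum_mul_sum] at hc
    simp only [Algebra.TensorProduct.tmul_mul_tmul] at hc
    simp only [one_mul, mul_one] at hc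
    rw [hc, Finset.sum_comm]
  -- Δh = Δ1 * Δh in representation form
  have E1 : (∑ i, x i ⊗ₜ[k] y i) = ∑ pp, ∑ i, (u pp * x i) ⊗ₜ[k] (v pp * y i) := by
    have hm := hW.comul_mul 1 h
    rw [one_mul, hx, h1, Finset.sum_mul_sum] at hm
    simp only [Algebra.TensorProduct.tmul_mul_tmul] at hm
    exact hm
  -- the trilinear map used with E3
  set T : H →ₗ[k] H →ₗ[k] H →ₗ[k] A :=
    ∑ i, ∑ s', tri3 (ctm ς (p i s')) ((ρ.flip 1) ∘ₗ LinearMap.mulRight k (q i s'))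
      (ctm ς g ∘ₗ LinearMap.mulRight k (y i)) with hT
  have hTval : ∀ α β γ, T α β γ =
      ∑ i, ∑ s', ς (α ⊗ₜ[k] p i s') * ρ (β * q i s') 1 * ς ((γ * y i) ⊗ₜ[k] g) := by
    intro α β γ
    simp [hT, LinearMap.sum_apply, Finset.sum_apply]
  refine Eq.symm ?_
  calc ς (h ⊗ₜ[k] g)
      = ∑ j, ∑ i, ς (u j ⊗ₜ[k] x i) * ς ((v j * y i) ⊗ₜ[k] g) := hB
    _ = ∑ j, ∑ i, ∑ t, ∑ s', ς (a j t ⊗ₜ[k] p i s') * ρ (b j t * q i s') 1 *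
          ς ((v j * y i) ⊗ₜ[k] g) := by
        refine Finset.sum_congr rfl fun j _ => Finset.sum_congr rfl fun i _ => ?_
        rw [h19 (u j) (x i) _ (a j) (b j) _ (p i) (q i) (hab j) (hpq i)]
        simp [Finset.sum_mul]
    _ = ∑ j, ∑ t, T (a j t) (b j t) (v j) := by
        refine Finset.sum_congr rfl fun j _ => ?_
        rw [Finset.sum_comm]
        exact Finset.sum_congr rfl fun t _ => (hTval _ _ _).symm
    _ = lift3 T (∑ j, ∑ t, a j t ⊗ₜ[k] (b j t ⊗ₜ[k] v j)) := by
        simp only [map_sum, lift3_tmul]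
    _ = lift3 T (∑ j, ∑ pp, u j ⊗ₜ[k] ((u pp * v j) ⊗ₜ[k] v pp)) := by rw [E3]
    _ = ∑ j, ∑ pp, ∑ i, ∑ s', ς (u j ⊗ₜ[k] p i s') * ρ (u pp * v j * q i s') 1 *
          ς ((v pp * y i) ⊗ₜ[k] g) := by
        simp only [map_sum, lift3_tmul]
        exact Finset.sum_congr rfl fun j _ => Finset.sum_congr rfl fun pp _ => hTval _ _ _
    _ = ∑ j, ∑ i, ∑ s', (ς (u j ⊗ₜ[k] p i s') * ρ (v j * q i s') 1) *
          ∑ pp, ρ (u pp) 1 * ς ((v pp * y i) ⊗ₜ[k] g) := by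
        refine Finset.sum_congr rfl fun j _ => ?_
        rw [Finset.sum_comm]
        refine Finset.sum_congr rfl fun i _ => ?_
        rw [Finset.sum_comm]
        refine Finset.sum_congr rfl fun s' _ => ?_
        have push := sum_bilin_congr
          (((LinearMap.mul k A) ∘ₗ (LinearMap.mulLeft k (ς (u j ⊗ₜ[k] p i s')))).compl₂
            (ctm ς g ∘ₗ LinearMap.mulRight k (y i)))
          (h22 (ρ (v j * q i s') 1) m₀ u v h1)
        simp only [LinearMap.compl₂_apply, LinearMap.comp_apply, LinearMap.mul_apply',
          LinearMap.mulLeft_apply, LinearMap.mulRight_apply, ctm_apply] at push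
        calc (∑ pp, ς (u j ⊗ₜ[k] p i s') * ρ (u pp * v j * q i s') 1 *
                ς ((v pp * y i) ⊗ₜ[k] g))
            = ∑ pp, ς (u j ⊗ₜ[k] p i s') * ρ (u pp) (ρ (v j * q i s') 1) *
                ς ((v pp * y i) ⊗ₜ[k] g) := by
              refine Finset.sum_congr rfl fun pp _ => ?_
              rw [mul_assoc (u pp), h11]
          _ = ∑ pp, ς (u j ⊗ₜ[k] p i s') * (ρ (v j * q i s') 1 * ρ (u pp) 1) *
                ς ((v pp * y i) ⊗ₜ[k] g) := by
              exact push.symm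
          _ = (ς (u j ⊗ₜ[k] p i s') * ρ (v j * q i s') 1) *
                ∑ pp, ρ (u pp) 1 * ς ((v pp * y i) ⊗ₜ[k] g) := by
              rw [Finset.mul_sum]
              exact Finset.sum_congr rfl fun pp _ => by simp only [mul_assoc]
    _ = ∑ i, (∑ j, ∑ s', ς (u j ⊗ₜ[k] p i s') * ρ (v j * q i s') 1) *
          ∑ pp, ρ (u pp) 1 * ς ((v pp * y i) ⊗ₜ[k] g) := by
        rw [Finset.sum_comm]
        refine Finset.sum_congr rfl fun i _ => ?_
        rw [Finset.sum_mul]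
        exact Finset.sum_congr rfl fun j _ => by rw [Finset.sum_mul]
    _ = ∑ i, ρ (x i) 1 * ∑ pp, ρ (u pp) 1 * ς ((v pp * y i) ⊗ₜ[k] g) := by
        refine Finset.sum_congr rfl fun i _ => ?_
        rw [← h19 1 (x i) m₀ u v _ (p i) (q i) h1 (hpq i),
          sigma_one_tmul W ρ ς h2 h18 h19 h21 h22 (x i)]
    _ = ∑ i, ∑ pp, ρ (u pp * x i) 1 * ς ((v pp * y i) ⊗ₜ[k] g) := by
        refine Finset.sum_congr rfl fun i _ => ?_
        have push := sum_bilin_congr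
          ((LinearMap.mul k A).compl₂ (ctm ς g ∘ₗ LinearMap.mulRight k (y i)))
          (h22 (ρ (x i) 1) m₀ u v h1)
        simp only [LinearMap.compl₂_apply, LinearMap.comp_apply, LinearMap.mul_apply',
          LinearMap.mulRight_apply, ctm_apply] at push
        calc ρ (x i) 1 * ∑ pp, ρ (u pp) 1 * ς ((v pp * y i) ⊗ₜ[k] g)
            = ∑ pp, ρ (x i) 1 * ρ (u pp) 1 * ς ((v pp * y i) ⊗ₜ[k] g) := by
              rw [Finset.mul_sum]
              exact Finset.sum_congr rfl fun pp _ => by simp only [mul_assoc]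
          _ = ∑ pp, ρ (u pp) (ρ (x i) 1) * ς ((v pp * y i) ⊗ₜ[k] g) := push
          _ = ∑ pp, ρ (u pp * x i) 1 * ς ((v pp * y i) ⊗ₜ[k] g) := by
              exact Finset.sum_congr rfl fun pp _ => by rw [h11]
    _ = ∑ i, ρ (x i) 1 * ς (y i ⊗ₜ[k] g) := by
        have push := congrArg (TensorProduct.lift
          (((LinearMap.mul k A) ∘ₗ (ρ.flip 1)).compl₂ (ctm ς g))) E1
        simp only [map_sum, TensorProduct.lift.tmul, LinearMap.compl₂_apply,
          LinearMap.comp_apply, LinearMap.mul_apply', LinearMap.flip_apply,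
          ctm_apply] at push
        rw [Finset.sum_comm]
        exact push.symm
end Lemmas4
/-- under conditions (2), (4), (11) and (17)–(22), one has
`(h⁽¹⁾·1_A)ς(h⁽²⁾⊗k) = ς(h⁽¹⁾⊗k)(h⁽²⁾·1_A) = ς(h⊗k)`. -/
theorem statement10 {k H A : Type*} [Field k] [Ring H] [Algebra k H] [Ring A] [Algebra k A]
    (W : WeakHopfData k H) (hW : IsWeakHopf W) (ρ : H →ₗ[k] A →ₗ[k] A)
    (ς : H ⊗[k] H →ₗ[k] A)
    (h2 : cond2 W ρ) (h4 : cond4 ρ) (h11 : cond11 ρ)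
    (h17 : cond17 W ρ ⇑ς) (h18 : cond18 W ρ ⇑ς) (h19 : cond19 W ρ ⇑ς)
    (h20 : cond20 W ρ ⇑ς) (h21 : cond21 W ρ ⇑ς) (h22 : cond22 W ρ) :
    ∀ (h g : H) (n : ℕ) (x y : Fin n → H),
      W.Δ h = ∑ i, x i ⊗ₜ[k] y i →
        (∑ i, ρ (x i) 1 * ς (y i ⊗ₜ[k] g)) = ς (h ⊗ₜ[k] g) ∧
        (∑ i, ς (x i ⊗ₜ[k] g) * ρ (y i) 1) = ς (h ⊗ₜ[k] g) := by
  intro h g n x y hx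
  exact ⟨claim_one W hW ρ ς h2 h11 h17 h18 h19 h21 h22 h g n x y hx,
    claim_two W hW ρ ς h2 h11 h19 h g n x y hx⟩
end

section
/- Let ς:H⊗H→A be a k-linear map such that ρ and ς satisfy conditions (11), (18) and (19). Then for all h,k ∈ H: (h⁽¹⁾k⁽¹⁾·1_A)ς(h⁽²⁾⊗k⁽²⁾) = (h⁽¹⁾·(k⁽¹⁾·1_A))ς(h⁽²⁾⊗k⁽²⁾) = ς(h⁽¹⁾⊗k⁽¹⁾)(h⁽²⁾k⁽²⁾·1_A) = ς(h⊗k). -/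
open scoped TensorProduct

/-- under conditions (11), (18) and (19), one has
`(h⁽¹⁾k⁽¹⁾·1_A)ς(h⁽²⁾⊗k⁽²⁾) = (h⁽¹⁾·(k⁽¹⁾·1_A))ς(h⁽²⁾⊗k⁽²⁾)
  = ς(h⁽¹⁾⊗k⁽¹⁾)(h⁽²⁾k⁽²⁾·1_A) = ς(h⊗k)`. -/
theorem statement11 {k H A : Type*} [Field k] [Ring H] [Algebra k H] [Ring A] [Algebra k A]
    (W : WeakHopfData k H) (hW : IsWeakHopf W) (ρ : H →ₗ[k] A →ₗ[k] A)
    (ς : H ⊗[k] H →ₗ[k] A)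
    (h11 : cond11 ρ) (h18 : cond18 W ρ ⇑ς) (h19 : cond19 W ρ ⇑ς) :
    ∀ (h g : H) (n : ℕ) (x y : Fin n → H) (m : ℕ) (u v : Fin m → H),
      W.Δ h = ∑ i, x i ⊗ₜ[k] y i → W.Δ g = ∑ j, u j ⊗ₜ[k] v j →
        (∑ i, ∑ j, ρ (x i * u j) 1 * ς (y i ⊗ₜ[k] v j) = ς (h ⊗ₜ[k] g)) ∧
        (∑ i, ∑ j, ρ (x i) (ρ (u j) 1) * ς (y i ⊗ₜ[k] v j) = ς (h ⊗ₜ[k] g)) ∧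
        (∑ i, ∑ j, ς (x i ⊗ₜ[k] u j) * ρ (y i * v j) 1 = ς (h ⊗ₜ[k] g)) := by
  intro h g n x y m u v hh hg
  have e3 : ∑ i, ∑ j, ς (x i ⊗ₜ[k] u j) * ρ (y i * v j) 1 = ς (h ⊗ₜ[k] g) :=
    (h19 h g n x y m u v hh hg).symm
  have e2 : ∑ i, ∑ j, ρ (x i) (ρ (u j) 1) * ς (y i ⊗ₜ[k] v j) = ς (h ⊗ₜ[k] g) := by
    rw [h18 h g 1 n x y m u v hh hg]; exact e3
  refine ⟨?_, e2, e3⟩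
  simp only [cond11] at h11; simp only [← h11]; exact e2
end

section
/- Let ς:H⊗H→A be a k-linear map such that ρ and ς satisfy conditions (11), (18) and (19). Then for all h,l ∈ H: ε(h⁽¹⁾l⁽¹⁾)ς(h⁽²⁾⊗l⁽²⁾) = ς(h⊗l). -/
open scoped TensorProduct

section aux12

set_option synthInstance.maxHeartbeats 1000000
set_option maxHeartbeats 1000000

variable {k H A : Type*} [Field k] [Ring H] [Algebra k H] [Ring A] [Algebra k A]

lemma exists_fin_repr (t : H ⊗[k] H) :
    ∃ (n : ℕ) (x y : Fin n → H), t = ∑ i, x i ⊗ₜ[k] y i := by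
  induction t with
  | zero => exact ⟨0, ![], ![], by simp⟩
  | tmul a b => exact ⟨1, ![a], ![b], by simp⟩
  | add s t hs ht =>
    obtain ⟨n₁, x₁, y₁, h₁⟩ := hs
    obtain ⟨n₂, x₂, y₂, h₂⟩ := ht
    refine ⟨n₁ + n₂, Fin.append x₁ x₂, Fin.append y₁ y₂, ?_⟩
    rw [Fin.sum_univ_add]
    simp [h₁, h₂]

/-- `Gmap ((a⊗b)⊗(c⊗d)) = (a*c) ⊗ (b⊗d)`. -/
noncomputable def Gmap (k H : Type*) [Field k] [Ring H] [Algebra k H] :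
    (H ⊗[k] H) ⊗[k] (H ⊗[k] H) →ₗ[k] H ⊗[k] (H ⊗[k] H) :=
  LinearMap.rTensor (H ⊗[k] H) (LinearMap.mul' k H) ∘ₗ
    (TensorProduct.tensorTensorTensorComm k H H H H).toLinearMap

lemma Gmap_tmul (a b c d : H) :
    Gmap k H ((a ⊗ₜ[k] b) ⊗ₜ[k] (c ⊗ₜ[k] d)) = (a * c) ⊗ₜ[k] (b ⊗ₜ[k] d) := by
  simp [Gmap]

/-- `Fmap (p⊗q) = p⁽¹⁾q⁽¹⁾ ⊗ (p⁽²⁾ ⊗ q⁽²⁾)`. -/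
noncomputable def Fmap (W : WeakHopfData k H) : H ⊗[k] H →ₗ[k] H ⊗[k] (H ⊗[k] H) :=
  Gmap k H ∘ₗ TensorProduct.map W.Δ W.Δ

lemma Fmap_tmul (W : WeakHopfData k H) (p q : H) {n : ℕ} {x y : Fin n → H} {m : ℕ}
    {u v : Fin m → H} (hp : W.Δ p = ∑ i, x i ⊗ₜ[k] y i)
    (hq : W.Δ q = ∑ j, u j ⊗ₜ[k] v j) :
    Fmap W (p ⊗ₜ[k] q) = ∑ i, ∑ j, (x i * u j) ⊗ₜ[k] (y i ⊗ₜ[k] v j) := by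
  simp only [Fmap, LinearMap.comp_apply, TensorProduct.map_tmul, hp, hq,
    TensorProduct.sum_tmul, TensorProduct.tmul_sum, map_sum, Gmap_tmul]
  exact Finset.sum_comm

/-- Collapse a first tensor factor using the counit. -/
noncomputable def ecol (W : WeakHopfData k H) (M : Type*) [AddCommGroup M] [Module k M] :
    H ⊗[k] M →ₗ[k] M :=
  (TensorProduct.lid k M).toLinearMap ∘ₗ LinearMap.rTensor M W.ε

lemma ecol_tmul (W : WeakHopfData k H) {M : Type*} [AddCommGroup M] [Module k M]
    (h : H) (m : M) : ecol W M (h ⊗ₜ[k] m) = W.ε h • m := by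
  simp [ecol]

lemma counit_sum (W : WeakHopfData k H) (hW : IsWeakHopf W) (h : H) {n : ℕ}
    {x y : Fin n → H} (hp : W.Δ h = ∑ i, x i ⊗ₜ[k] y i) :
    ∑ i, W.ε (x i) • y i = h := by
  have := hW.counit_left h
  rw [hp] at this
  simpa [map_sum] using this

lemma ecol_assoc (W : WeakHopfData k H) (hW : IsWeakHopf W) (M : Type*)
    [AddCommGroup M] [Module k M] (w : H ⊗[k] M) :
    ecol W (H ⊗[k] M) ((TensorProduct.assoc k H H M) ((LinearMap.rTensor M W.Δ) w)) = w := by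
  induction w with
  | zero => simp
  | add s t hs ht => simp only [map_add, hs, ht]
  | tmul h m =>
    obtain ⟨n, x, y, hp⟩ := exists_fin_repr (W.Δ h)
    have hc := counit_sum W hW h hp
    rw [LinearMap.rTensor_tmul, hp]
    simp only [TensorProduct.sum_tmul, map_sum, TensorProduct.assoc_tmul, ecol_tmul,
      TensorProduct.smul_tmul']
    rw [← TensorProduct.sum_tmul, hc]

/-- `F0 (p⊗q) = ε(p⁽¹⁾q⁽¹⁾) • (p⁽²⁾ ⊗ q⁽²⁾)`. -/
noncomputable def F0 (W : WeakHopfData k H) : H ⊗[k] H →ₗ[k] H ⊗[k] H :=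
  ecol W (H ⊗[k] H) ∘ₗ Fmap W

lemma F_ecol (W : WeakHopfData k H) (z : H ⊗[k] (H ⊗[k] H)) :
    Fmap W (ecol W (H ⊗[k] H) z) =
      ecol W (H ⊗[k] (H ⊗[k] H)) ((LinearMap.lTensor H (Fmap W)) z) := by
  induction z with
  | zero => simp
  | add s t hs ht => simp only [map_add, hs, ht]
  | tmul h w => simp [ecol_tmul]

lemma ttc_tmul' (α γ : H) (w w' : H ⊗[k] H) :
    (TensorProduct.tensorTensorTensorComm k H (H ⊗[k] H) H (H ⊗[k] H))
        ((α ⊗ₜ[k] w) ⊗ₜ[k] (γ ⊗ₜ[k] w')) = (α ⊗ₜ[k] γ) ⊗ₜ[k] (w ⊗ₜ[k] w') := by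
  induction w with
  | zero => simp
  | add s t hs ht => simp only [TensorProduct.tmul_add, TensorProduct.add_tmul, map_add,
      hs, ht]
  | tmul a b =>
    induction w' with
    | zero => simp
    | add s t hs ht => simp only [TensorProduct.tmul_add, TensorProduct.add_tmul, map_add,
        hs, ht]
    | tmul c d => simp

lemma lemK (W : WeakHopfData k H) (hW : IsWeakHopf W) (z : H ⊗[k] H) :
    (TensorProduct.assoc k H H (H ⊗[k] H)) ((LinearMap.rTensor (H ⊗[k] H) W.Δ) (Fmap W z)) =
      (LinearMap.lTensor H (Fmap W)) (Fmap W z) := by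
  induction z with
  | zero => simp
  | add s t hs ht => simp only [map_add, hs, ht]
  | tmul p q =>
    obtain ⟨n, x, y, hp⟩ := exists_fin_repr (W.Δ p)
    obtain ⟨m, u, v, hq⟩ := exists_fin_repr (W.Δ q)
    choose m₁ a b hab using fun i => exists_fin_repr (W.Δ (x i))
    choose m₂ c d hcd using fun j => exists_fin_repr (W.Δ (u j))
    -- coassociativity for p and q, in explicit form
    have cp : ∑ i, ∑ s, a i s ⊗ₜ[k] (b i s ⊗ₜ[k] y i) = ∑ i, x i ⊗ₜ[k] W.Δ (y i) := by
      have h0 := hW.coassoc p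
      rw [hp] at h0
      simpa only [map_sum, LinearMap.rTensor_tmul, LinearMap.lTensor_tmul, hab,
        TensorProduct.sum_tmul, TensorProduct.assoc_tmul] using h0
    have cq : ∑ j, ∑ t, c j t ⊗ₜ[k] (d j t ⊗ₜ[k] v j) = ∑ j, u j ⊗ₜ[k] W.Δ (v j) := by
      have h0 := hW.coassoc q
      rw [hq] at h0
      simpa only [map_sum, LinearMap.rTensor_tmul, LinearMap.lTensor_tmul, hcd,
        TensorProduct.sum_tmul, TensorProduct.assoc_tmul] using h0
    -- the auxiliary map Θ
    set Θ : (H ⊗[k] (H ⊗[k] H)) ⊗[k] (H ⊗[k] (H ⊗[k] H)) →ₗ[k] H ⊗[k] (H ⊗[k] (H ⊗[k] H)) :=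
      TensorProduct.map (LinearMap.mul' k H) (Gmap k H) ∘ₗ
        (TensorProduct.tensorTensorTensorComm k H (H ⊗[k] H) H (H ⊗[k] H)).toLinearMap
      with hΘdef
    have hΘ : ∀ (α γ : H) (w w' : H ⊗[k] H),
        Θ ((α ⊗ₜ[k] w) ⊗ₜ[k] (γ ⊗ₜ[k] w')) =
          (α * γ) ⊗ₜ[k] Gmap k H (w ⊗ₜ[k] w') := by
      intro α γ w w'
      rw [hΘdef]
      simp only [LinearMap.comp_apply, LinearEquiv.coe_coe, ttc_tmul',
        TensorProduct.map_tmul, LinearMap.mul'_apply]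
    -- left-hand side
    have hLHS : (TensorProduct.assoc k H H (H ⊗[k] H))
        ((LinearMap.rTensor (H ⊗[k] H) W.Δ) (Fmap W (p ⊗ₜ[k] q))) =
        Θ ((∑ i, ∑ s, a i s ⊗ₜ[k] (b i s ⊗ₜ[k] y i)) ⊗ₜ[k]
           (∑ j, ∑ t, c j t ⊗ₜ[k] (d j t ⊗ₜ[k] v j))) := by
      rw [Fmap_tmul W p q hp hq]
      simp only [map_sum, LinearMap.rTensor_tmul, hW.comul_mul, hab, hcd,
        Finset.sum_mul, Finset.mul_sum, Algebra.TensorProduct.tmul_mul_tmul,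
        TensorProduct.sum_tmul, TensorProduct.tmul_sum, TensorProduct.assoc_tmul,
        hΘ, Gmap_tmul]
      rw [Finset.sum_comm]
      exact Finset.sum_congr rfl fun j _ => Finset.sum_comm
    have hRHS : (LinearMap.lTensor H (Fmap W)) (Fmap W (p ⊗ₜ[k] q)) =
        Θ ((∑ i, x i ⊗ₜ[k] W.Δ (y i)) ⊗ₜ[k] (∑ j, u j ⊗ₜ[k] W.Δ (v j))) := by
      rw [Fmap_tmul W p q hp hq]
      simp only [map_sum, LinearMap.lTensor_tmul, TensorProduct.sum_tmul,
        TensorProduct.tmul_sum, hΘ]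
      rw [Finset.sum_comm]
      exact Finset.sum_congr rfl fun j _ => Finset.sum_congr rfl fun i _ => by
        simp only [Fmap, LinearMap.comp_apply, TensorProduct.map_tmul]
    rw [hLHS, hRHS, cp, cq]

lemma lemA (W : WeakHopfData k H) (ρ : H →ₗ[k] A →ₗ[k] A) (ς : H ⊗[k] H →ₗ[k] A)
    (h11 : cond11 ρ) (h18 : cond18 W ρ ⇑ς) (h19 : cond19 W ρ ⇑ς) (z : H ⊗[k] H) :
    LinearMap.mul' k A ((TensorProduct.map (ρ.flip 1) ς) (Fmap W z)) = ς z := by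
  induction z with
  | zero => simp
  | add s t hs ht => simp only [map_add, hs, ht]
  | tmul p q =>
    obtain ⟨n, x, y, hp⟩ := exists_fin_repr (W.Δ p)
    obtain ⟨m, u, v, hq⟩ := exists_fin_repr (W.Δ q)
    rw [Fmap_tmul W p q hp hq]
    simp only [map_sum, TensorProduct.map_tmul, LinearMap.mul'_apply, LinearMap.flip_apply]
    rw [h19 p q n x y m u v hp hq, ← h18 p q 1 n x y m u v hp hq]
    exact Finset.sum_congr rfl fun i _ => Finset.sum_congr rfl fun j _ => by
      rw [h11]

lemma lemB_s12 (W : WeakHopfData k H) (hW : IsWeakHopf W) (z : H ⊗[k] H) :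
    Fmap W (F0 W z) = Fmap W z := by
  rw [F0, LinearMap.comp_apply, F_ecol, ← lemK W hW, ecol_assoc W hW]

end aux12

/-- under conditions (11), (18) and (19), one has
`ε(h⁽¹⁾l⁽¹⁾)ς(h⁽²⁾⊗l⁽²⁾) = ς(h⊗l)`. -/
theorem statement12 {k H A : Type*} [Field k] [Ring H] [Algebra k H] [Ring A] [Algebra k A]
    (W : WeakHopfData k H) (hW : IsWeakHopf W) (ρ : H →ₗ[k] A →ₗ[k] A)
    (ς : H ⊗[k] H →ₗ[k] A)
    (h11 : cond11 ρ) (h18 : cond18 W ρ ⇑ς) (h19 : cond19 W ρ ⇑ς) :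
    ∀ (h g : H) (n : ℕ) (x y : Fin n → H) (m : ℕ) (u v : Fin m → H),
      W.Δ h = ∑ i, x i ⊗ₜ[k] y i → W.Δ g = ∑ j, u j ⊗ₜ[k] v j →
        ∑ i, ∑ j, W.ε (x i * u j) • ς (y i ⊗ₜ[k] v j) = ς (h ⊗ₜ[k] g) := by
  intro h g n x y m u v hh hg
  have hF0 : F0 W (h ⊗ₜ[k] g) = ∑ i, ∑ j, W.ε (x i * u j) • (y i ⊗ₜ[k] v j) := by
    rw [F0, LinearMap.comp_apply, Fmap_tmul W h g hh hg]
    simp only [map_sum, ecol_tmul]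
  have e1 : ∑ i, ∑ j, W.ε (x i * u j) • ς (y i ⊗ₜ[k] v j) = ς (F0 W (h ⊗ₜ[k] g)) := by
    rw [hF0]
    simp only [map_sum, map_smul]
  rw [e1, ← lemA W ρ ς h11 h18 h19 (F0 W (h ⊗ₜ[k] g)), lemB_s12 W hW,
    lemA W ρ ς h11 h18 h19 (h ⊗ₜ[k] g)]
end
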